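/- Let q be a prime power, k < n ≤ m, α_1,...,α_n ∈ F_{q^m} linearly independent over F_q, η ∈ F_{q^m}*, 0 ≤ h ≤ k-1. Consider the twisted Gabidulin code C₁ with t = 0, i.e., the row (α_j^{q^h} + η α_j^{q^k})_j replaces row h of the Moore matrix. If η^{-1} = c_{k-h}, where ∏_{α ∈ ⟨α_1,...,α_k⟩_{F_q}}(x-α) = ∑_{j=0}^k c_j x^{q^{k-j}}, then C₁ is not MRD. -/
import Mathlib


open Finset Polynomial

/-- for the one-twist twisted Gabidulin code with `t = 0`, if
`η⁻¹ = c_{k-h}` where `∏_{β ∈ ⟨α_1,…,α_k⟩_{F_q}}(X - β) = ∑_{j=0}^k c_j X^{q^{k-j}}`,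
then `C₁` is not MRD. -/
theorem C1_t0_not_MRD {Fq K : Type*} [Field Fq] [Fintype Fq] [Field K] [Fintype K]
    [Algebra Fq K] (q m n k h : ℕ) (hq : Fintype.card Fq = q)
    (hK : Fintype.card K = q ^ m) (hkn : k < n) (hnm : n ≤ m) (hh : h < k)
    (α : ℕ → K) (hα : LinearIndependent Fq (fun i : Fin n => α (i:ℕ)))
    [DecidablePred (· ∈ Submodule.span Fq (Set.range (fun i : Fin k => α (i:ℕ))))]
    (c : ℕ → K)
    (hc : ∏ β ∈ Finset.univ.filter (· ∈ Submodule.span Fq (Set.range (fun i : Fin k => α (i:ℕ)))),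
            (Polynomial.X - Polynomial.C β)
          = ∑ j ∈ Finset.range (k+1), Polynomial.C (c j) * Polynomial.X ^ q ^ (k - j))
    (η : K) (hη : η ≠ 0) (hinv : η⁻¹ = c (k - h)) :
    ¬ (sInf {w : ℕ | ∃ c' ∈ Submodule.span K (Set.range (fun i : Fin k => fun j : Fin n =>
          if (i:ℕ) = h then α (j:ℕ) ^ q ^ h + η * α (j:ℕ) ^ q ^ k
          else α (j:ℕ) ^ q ^ (i:ℕ))),
        c' ≠ 0 ∧ w = Module.finrank Fq (Submodule.span Fq (Set.range c'))} = n - k + 1) := by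
  classical
  intro hEq
  have hq1 : 1 < q := hq ▸ Fintype.one_lt_card
  set S : Finset K :=
    Finset.univ.filter (· ∈ Submodule.span Fq (Set.range (fun i : Fin k => α (i:ℕ)))) with hS
  set f : K[X] := ∏ β ∈ S, (X - C β) with hf
  -- first k alphas linearly independent
  have hα' : LinearIndependent Fq (fun i : Fin k => α (i:ℕ)) := by
    have := hα.comp (Fin.castLE hkn.le) (Fin.castLE_injective _)
    exact this
  -- card S = q ^ k
  have hfr : Module.finrank Fq
      (Submodule.span Fq (Set.range (fun i : Fin k => α (i:ℕ)))) = k := by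
    rw [finrank_span_eq_card hα']; simp
  have hcard : S.card = q ^ k := by
    have h1 : Fintype.card (Submodule.span Fq (Set.range (fun i : Fin k => α (i:ℕ))))
        = Fintype.card Fq ^ Module.finrank Fq
            (Submodule.span Fq (Set.range (fun i : Fin k => α (i:ℕ)))) :=
      Module.card_eq_pow_finrank (K := Fq)
    rw [hfr, hq] at h1
    rw [← h1, hS]
    exact (Fintype.card_subtype _).symm
  have hcf : f = ∑ j ∈ Finset.range (k+1), C (c j) * X ^ q ^ (k - j) := hc
  -- c 0 = 1
  have hc0 : c 0 = 1 := by
    have hmon : f.Monic := monic_prod_of_monic _ _ fun β _ => monic_X_sub_C β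
    have hdeg : f.natDegree = q ^ k := by
      rw [hf, natDegree_prod_of_monic _ _ fun β _ => monic_X_sub_C β]
      simp [hcard]
    have h1 : f.coeff (q ^ k) = 1 := by
      have := hmon.coeff_natDegree
      rwa [hdeg] at this
    have h2 : f.coeff (q ^ k) = c 0 := by
      rw [hcf, finset_sum_coeff]
      rw [Finset.sum_eq_single 0]
      · simp [coeff_C_mul, coeff_X_pow]
      · intro j hj hj0
        have hjk : j ≤ k := by simp at hj; omega
        have : q ^ (k - j) < q ^ k :=
          Nat.pow_lt_pow_right hq1 (by omega)
        simp only [coeff_C_mul, coeff_X_pow, mul_ite, mul_one, mul_zero, ite_eq_right_iff]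
        intro he
        omega
      · intro h0; simp at h0
    rw [← h2, h1]
  have hcη : c (k - h) * η = 1 := by
    rw [← hinv]; exact inv_mul_cancel₀ hη
  -- the codeword
  set c' : Fin n → K := fun j => f.eval (α (j:ℕ)) with hc'
  -- its value as a combination
  have hval : ∀ j : Fin n, c' j
      = ∑ i : Fin k, c (k - (i:ℕ)) *
          (if (i:ℕ) = h then α (j:ℕ) ^ q ^ h + η * α (j:ℕ) ^ q ^ k
           else α (j:ℕ) ^ q ^ (i:ℕ)) := by
    intro j
    have e1 : c' j = ∑ j' ∈ Finset.range (k+1), c j' * α (j:ℕ) ^ q ^ (k - j') := by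
      rw [hc', hcf]
      simp [eval_finset_sum]
    have e2 : ∑ j' ∈ Finset.range (k+1), c j' * α (j:ℕ) ^ q ^ (k - j')
        = ∑ i ∈ Finset.range (k+1), c (k - i) * α (j:ℕ) ^ q ^ i := by
      rw [← Finset.sum_range_reflect]
      apply Finset.sum_congr rfl
      intro i hi
      simp only [Finset.mem_range] at hi
      have : k - (k - i) = i := by omega
      rw [show k + 1 - 1 - i = k - i from by omega, this]
    have e3 : ∑ i ∈ Finset.range (k+1), c (k - i) * α (j:ℕ) ^ q ^ i
        = (∑ i ∈ Finset.range k, c (k - i) * α (j:ℕ) ^ q ^ i) + α (j:ℕ) ^ q ^ k := by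
      rw [Finset.sum_range_succ]
      simp [hc0]
    have e4 : ∑ i : Fin k, c (k - (i:ℕ)) *
          (if (i:ℕ) = h then α (j:ℕ) ^ q ^ h + η * α (j:ℕ) ^ q ^ k
           else α (j:ℕ) ^ q ^ (i:ℕ))
        = (∑ i ∈ Finset.range k, c (k - i) * α (j:ℕ) ^ q ^ i) + α (j:ℕ) ^ q ^ k := by
      rw [Fin.sum_univ_eq_sum_range
        (fun i => c (k - i) * (if i = h then α (j:ℕ) ^ q ^ h + η * α (j:ℕ) ^ q ^ k
           else α (j:ℕ) ^ q ^ i))]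
      have : ∀ i ∈ Finset.range k,
          c (k - i) * (if i = h then α (j:ℕ) ^ q ^ h + η * α (j:ℕ) ^ q ^ k
           else α (j:ℕ) ^ q ^ i)
          = c (k - i) * α (j:ℕ) ^ q ^ i
            + (if i = h then c (k - h) * η * α (j:ℕ) ^ q ^ k else 0) := by
        intro i _
        by_cases hih : i = h
        · subst hih; simp; ring
        · simp [hih]
      rw [Finset.sum_congr rfl this, Finset.sum_add_distrib,
        Finset.sum_ite_eq' (Finset.range k) h
          (fun _ => c (k - h) * η * α (j:ℕ) ^ q ^ k)]
      simp [Finset.mem_range.mpr hh, hcη]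
    rw [e1, e2, e3, ← e4]
  -- membership in the code
  have hmem : c' ∈ Submodule.span K (Set.range (fun i : Fin k => fun j : Fin n =>
          if (i:ℕ) = h then α (j:ℕ) ^ q ^ h + η * α (j:ℕ) ^ q ^ k
          else α (j:ℕ) ^ q ^ (i:ℕ))) := by
    have : c' = ∑ i : Fin k, c (k - (i:ℕ)) • (fun j : Fin n =>
          if (i:ℕ) = h then α (j:ℕ) ^ q ^ h + η * α (j:ℕ) ^ q ^ k
          else α (j:ℕ) ^ q ^ (i:ℕ)) := by
      funext j
      rw [hval j]
      simp [Finset.sum_apply]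
    rw [this]
    exact Submodule.sum_mem _ fun i _ =>
      Submodule.smul_mem _ _ (Submodule.subset_span (Set.mem_range_self i))
  -- zero on the first k coordinates
  have hzero : ∀ j : Fin n, (j:ℕ) < k → c' j = 0 := by
    intro j hj
    have hmemV : α (j:ℕ) ∈ Submodule.span Fq (Set.range (fun i : Fin k => α (i:ℕ))) :=
      Submodule.subset_span ⟨⟨(j:ℕ), hj⟩, rfl⟩
    have hmemS : α (j:ℕ) ∈ S := by rw [hS]; simp [hmemV]
    show f.eval (α (j:ℕ)) = 0
    rw [hf, eval_prod]
    exact Finset.prod_eq_zero hmemS (by simp)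
  -- nonzero at position k
  have hne : c' ≠ 0 := by
    intro h0
    have hk' : (⟨k, hkn⟩ : Fin n) ∈ Set.univ := Set.mem_univ _
    have : f.eval (α k) = 0 := by
      have := congrFun h0 ⟨k, hkn⟩
      exact this
    rw [hf, eval_prod] at this
    obtain ⟨β, hβ, hβ0⟩ := Finset.prod_eq_zero_iff.mp this
    simp only [eval_sub, eval_X, eval_C, sub_eq_zero] at hβ0
    rw [hS] at hβ
    simp only [Finset.mem_filter, Finset.mem_univ, true_and] at hβ
    rw [← hβ0] at hβ
    -- α k ∉ V
    have hnot : α k ∉ Submodule.span Fq (Set.range (fun i : Fin k => α (i:ℕ))) := by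
      have h1 : α ((⟨k, hkn⟩ : Fin n) : ℕ) ∉ Submodule.span Fq
          ((fun i : Fin n => α (i:ℕ)) '' {j : Fin n | (j:ℕ) < k}) :=
        hα.notMem_span_image (by simp)
      have h2 : ((fun i : Fin n => α (i:ℕ)) '' {j : Fin n | (j:ℕ) < k})
          = Set.range (fun i : Fin k => α (i:ℕ)) := by
        ext x
        constructor
        · rintro ⟨j, hj, rfl⟩; exact ⟨⟨(j:ℕ), hj⟩, rfl⟩
        · rintro ⟨i, rfl⟩; exact ⟨⟨(i:ℕ), lt_trans i.2 hkn⟩, i.2, rfl⟩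
      rw [h2] at h1
      exact h1
    exact hnot hβ
  -- rank bound
  haveI : Module.Finite Fq K := Module.Finite.of_finite
  set T : Finset K := (Finset.univ.filter (fun j : Fin n => k ≤ (j:ℕ))).image c' with hT
  have hsub : Set.range c' ⊆ insert (0:K) ↑T := by
    rintro x ⟨j, rfl⟩
    by_cases hj : (j:ℕ) < k
    · left; exact hzero j hj
    · right
      exact Finset.mem_image_of_mem c' (by simp; omega)
  have hrank : Module.finrank Fq (Submodule.span Fq (Set.range c')) ≤ n - k := by
    have h1 : Submodule.span Fq (Set.range c') ≤ Submodule.span Fq (↑T : Set K) := by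
      have := Submodule.span_mono (R := Fq) hsub
      rwa [Submodule.span_insert_zero] at this
    have h2 : Module.finrank Fq (Submodule.span Fq (↑T : Set K)) ≤ T.card :=
      finrank_span_finset_le_card T
    have h3 : T.card ≤ n - k := by
      refine le_trans (Finset.card_image_le) ?_
      have he : Finset.univ.filter (fun j : Fin n => k ≤ (j:ℕ))
          = Finset.Ici (⟨k, hkn⟩ : Fin n) := by
        ext j
        simp [Fin.le_def]
      rw [he, Fin.card_Ici]
    exact le_trans (Submodule.finrank_mono h1) (le_trans h2 h3)
  -- conclude
  have hmemSet : Module.finrank Fq (Submodule.span Fq (Set.range c')) ∈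
      {w : ℕ | ∃ c' ∈ Submodule.span K (Set.range (fun i : Fin k => fun j : Fin n =>
          if (i:ℕ) = h then α (j:ℕ) ^ q ^ h + η * α (j:ℕ) ^ q ^ k
          else α (j:ℕ) ^ q ^ (i:ℕ))),
        c' ≠ 0 ∧ w = Module.finrank Fq (Submodule.span Fq (Set.range c'))} :=
    ⟨c', hmem, hne, rfl⟩
  have := Nat.sInf_le hmemSet
  rw [hEq] at this
  omega
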